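/- For λ>0 and μ∈ℝ, the bracket on H = ℝ[A,B,D]/(AD−B²−1) defined by {A,B} = 2λA(A+D+μ), {A,D} = 4λB(A+D+μ), {B,D} = 2λD(A+D+μ) satisfies the Jacobi identity and is compatible with the relation AD−B²=1. -/
import Mathlib


open MvPolynomial

noncomputable section

/-- The polynomial ring `ℝ[A,B,D]` with `A = X 0, B = X 1, D = X 2`. -/
abbrev R3 : Type := MvPolynomial (Fin 3) ℝ

/-- The biderivation determined by the matrix `Pm` of brackets of generators. -/
def pb (Pm : Fin 3 → Fin 3 → R3) (f g : R3) : R3 :=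
  ∑ i : Fin 3, ∑ j : Fin 3, Pm i j * pderiv i f * pderiv j g

def A : R3 := X 0
def B : R3 := X 1
def D : R3 := X 2

/-- The K-type bracket on `H`: `{A,B} = 2λA(A+D+μ)`, `{A,D} = 4λB(A+D+μ)`,
`{B,D} = 2λD(A+D+μ)`. -/
def PH (lam μ : ℝ) : Fin 3 → Fin 3 → R3 :=
  ![ ![0, C (2*lam) * (A * (A + D + C μ)), C (4*lam) * (B * (A + D + C μ))],
     ![-(C (2*lam) * (A * (A + D + C μ))), 0, C (2*lam) * (D * (A + D + C μ))],
     ![-(C (4*lam) * (B * (A + D + C μ))), -(C (2*lam) * (D * (A + D + C μ))), 0] ]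

/-- Mixed partial derivatives commute. -/
lemma pderiv_comm' (i j : Fin 3) (p : R3) :
    pderiv i (pderiv j p) = pderiv j (pderiv i p) := by
  induction p using MvPolynomial.induction_on with
  | C a => simp
  | add p q hp hq => simp [hp, hq]
  | mul_X p n hp =>
    simp only [pderiv_mul, map_add, hp, pderiv_X, smul_eq_mul]
    by_cases h1 : n = i <;> by_cases h2 : n = j <;>
      simp [Pi.single_apply, h1, h2] <;> split_ifs <;> simp <;> ring

/-- The common factor `A + D + μ`. -/
def q (μ : ℝ) : R3 := X 0 + X 2 + C μ

/-- Explicit expansion of the bracket. -/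
lemma pb_PH_eq (lam μ : ℝ) (g h : R3) : pb (PH lam μ) g h =
    C (2*lam) * (X 0 * q μ) * (pderiv 0 g * pderiv 1 h - pderiv 1 g * pderiv 0 h) +
    C (4*lam) * (X 1 * q μ) * (pderiv 0 g * pderiv 2 h - pderiv 2 g * pderiv 0 h) +
    C (2*lam) * (X 2 * q μ) * (pderiv 1 g * pderiv 2 h - pderiv 2 g * pderiv 1 h) := by
  simp only [pb, PH, A, B, D, q, Fin.sum_univ_three, Matrix.cons_val_zero,
    Matrix.cons_val_one, Matrix.head_cons, Matrix.cons_val_two, Matrix.tail_cons]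
  ring

lemma dq0 (μ : ℝ) : pderiv 0 (q μ) = 1 := by simp [q, pderiv_X, Pi.single_apply]
lemma dq1 (μ : ℝ) : pderiv 1 (q μ) = 0 := by simp [q, pderiv_X, Pi.single_apply]
lemma dq2 (μ : ℝ) : pderiv 2 (q μ) = 1 := by simp [q, pderiv_X, Pi.single_apply]
lemma dx00 : pderiv 0 (X 0 : R3) = 1 := pderiv_X_self 0
lemma dx11 : pderiv 1 (X 1 : R3) = 1 := pderiv_X_self 1
lemma dx22 : pderiv 2 (X 2 : R3) = 1 := pderiv_X_self 2
lemma dx01 : pderiv 0 (X 1 : R3) = 0 := pderiv_X_of_ne (by decide)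
lemma dx02 : pderiv 0 (X 2 : R3) = 0 := pderiv_X_of_ne (by decide)
lemma dx10 : pderiv 1 (X 0 : R3) = 0 := pderiv_X_of_ne (by decide)
lemma dx12 : pderiv 1 (X 2 : R3) = 0 := pderiv_X_of_ne (by decide)
lemma dx20 : pderiv 2 (X 0 : R3) = 0 := pderiv_X_of_ne (by decide)
lemma dx21 : pderiv 2 (X 1 : R3) = 0 := pderiv_X_of_ne (by decide)

set_option maxHeartbeats 2000000 in
/-- For `λ > 0` and `μ ∈ ℝ`, the bracket `{A,B}=2λA(A+D+μ)`, `{A,D}=4λB(A+D+μ)`,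
`{B,D}=2λD(A+D+μ)` satisfies the Jacobi identity and is compatible with the relation
`AD − B² = 1`. -/
theorem stmt_12 (lam μ : ℝ) (hlam : 0 < lam) :
    (∀ f g h : R3,
      pb (PH lam μ) f (pb (PH lam μ) g h) + pb (PH lam μ) g (pb (PH lam μ) h f) +
        pb (PH lam μ) h (pb (PH lam μ) f g) = 0) ∧
    (∀ i : Fin 3,
      pb (PH lam μ) (X i) (A * D - B ^ 2 - 1) ∈
        Ideal.span {(A * D - B ^ 2 - 1 : R3)}) := by
  constructor
  · intro f g h
    rw [pb_PH_eq lam μ f (pb (PH lam μ) g h), pb_PH_eq lam μ g (pb (PH lam μ) h f),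
        pb_PH_eq lam μ h (pb (PH lam μ) f g), pb_PH_eq lam μ g h, pb_PH_eq lam μ h f,
        pb_PH_eq lam μ f g]
    simp only [map_add, map_sub, pderiv_mul, pderiv_C_mul, pderiv_C, smul_eq_mul,
      dq0, dq1, dq2, dx00, dx11, dx22, dx01, dx02, dx10, dx12, dx20, dx21,
      mul_zero, zero_mul, add_zero, zero_add, mul_one, one_mul, sub_zero, zero_sub,
      pderiv_comm' 1 0, pderiv_comm' 2 0, pderiv_comm' 2 1]
    ring
  · intro i
    have hz : pb (PH lam μ) (X i) (A * D - B ^ 2 - 1) = 0 := by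
      fin_cases i <;>
      · simp only [pb, PH, A, B, D, Fin.sum_univ_three, Matrix.cons_val_zero,
          Matrix.cons_val_one, Matrix.head_cons, Matrix.cons_val_two, Matrix.tail_cons,
          map_sub, map_one, map_mul, pderiv_mul, pderiv_X, pderiv_C, pderiv_one,
          smul_eq_mul, map_pow]
        simp [Pi.single_apply, map_ofNat]
        ring
    rw [hz]; exact Ideal.zero_mem _
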